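/- Let G be a connected graph, k a positive integer, and A ⊆ V(G) a set such that every vertex of G is within distance k of some vertex of A, and such that the graph G^k[A] (the subgraph of the k-th power of G induced by A) is connected. Then for every a ∈ A, e_G(a) ≤ k·e_{G^k[A]}(a) + k. -/

import Mathlib

open SimpleGraph Finset

noncomputable def ecc {V : Type*} [Fintype V] (G : SimpleGraph V) (v : V) : ℕ :=
  Finset.univ.sup (G.dist v)

noncomputable def avec {V : Type*} [Fintype V] (G : SimpleGraph V) : ℝ :=
  (∑ v, (ecc G v : ℝ)) / (Fintype.card V)

/-- G contains no 4-cycle as a (not necessarily induced) subgraph. -/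
def C4Free {V : Type*} (G : SimpleGraph V) : Prop :=
  ¬ ∃ a b c d : V, a ≠ c ∧ b ≠ d ∧ G.Adj a b ∧ G.Adj b c ∧ G.Adj c d ∧ G.Adj d a

/-- The k-th power of a graph: vertices adjacent iff distinct and at distance at most k. -/
noncomputable def powG {V : Type*} (G : SimpleGraph V) (k : ℕ) : SimpleGraph V where
  Adj u v := u ≠ v ∧ G.dist u v ≤ k
  symm := ⟨fun u v ⟨h1, h2⟩ => ⟨h1.symm, by rwa [SimpleGraph.dist_comm]⟩⟩
  loopless := ⟨fun u ⟨h1, _⟩ => h1 rfl⟩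

private lemma walk_bound {V : Type*} [Fintype V] (G : SimpleGraph V) (hG : G.Connected)
    (k : ℕ) (A : Finset V) :
    ∀ {p q : (↑A : Set V)} (w : (SimpleGraph.induce (↑A : Set V) (powG G k)).Walk p q),
      G.dist p.1 q.1 ≤ k * w.length := by
  intro p q w
  induction w with
  | nil => simp
  | @cons u v x h w ih =>
      have hadj : G.dist u.1 v.1 ≤ k := h.2
      calc G.dist u.1 x.1 ≤ G.dist u.1 v.1 + G.dist v.1 x.1 := hG.dist_triangle
        _ ≤ k + k * w.length := Nat.add_le_add hadj ih
        _ = k * (w.length + 1) := by ring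
        _ = k * (SimpleGraph.Walk.cons h w).length := by simp

theorem stmt9 {V : Type*} [Fintype V] (G : SimpleGraph V) (hG : G.Connected)
    (k : ℕ) (hk : 0 < k)
    (A : Finset V) (hdom : ∀ x : V, ∃ a ∈ A, G.dist x a ≤ k)
    (hconn : (SimpleGraph.induce (↑A : Set V) (powG G k)).Connected)
    (a : V) (ha : a ∈ A) :
    ecc G a ≤ k * ecc (SimpleGraph.induce (↑A : Set V) (powG G k)) ⟨a, ha⟩ + k := by
  set H := SimpleGraph.induce (↑A : Set V) (powG G k) with hH
  apply Finset.sup_le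
  intro x _
  obtain ⟨b, hb, hbx⟩ := hdom x
  have hreach : H.Reachable ⟨a, ha⟩ ⟨b, hb⟩ := hconn.preconnected _ _
  obtain ⟨w, hw⟩ := hreach.exists_walk_length_eq_dist
  have h1 : G.dist a b ≤ k * H.dist ⟨a, ha⟩ ⟨b, hb⟩ := by
    have := walk_bound G hG k A w
    rwa [hw] at this
  have h2 : H.dist ⟨a, ha⟩ ⟨b, hb⟩ ≤ ecc H ⟨a, ha⟩ :=
    Finset.le_sup (Finset.mem_univ _)
  calc G.dist a x ≤ G.dist a b + G.dist b x := hG.dist_triangle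
    _ ≤ k * H.dist ⟨a, ha⟩ ⟨b, hb⟩ + k := by
        rw [SimpleGraph.dist_comm] at hbx; exact Nat.add_le_add h1 hbx
    _ ≤ k * ecc H ⟨a, ha⟩ + k := by
        exact Nat.add_le_add_right (Nat.mul_le_mul_left k h2) k
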